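/- Let k be a field, let r be a positive integer, and let α : Fin r → ℝ satisfy α i > 0 for every i. There exists a unique valuation v : MvPowerSeries (Fin r) k → ℝ≥0 (a Valuation in Mathlib's sense, with values in the nonnegative reals with multiplication) such that v(0) = 0 and v(f) = exp(−w_α(f)) for every nonzero f in MvPowerSeries (Fin r) k. -/

import Mathlib

open scoped NNReal

/-- The α-weighted order `w_α(f) = inf { ∑ i, α i * β i : coeff β f ≠ 0 }` of a
multivariate formal power series. -/
noncomputable def wOrd {k : Type*} [Field k] {r : ℕ} (α : Fin r → ℝ)
    (f : MvPowerSeries (Fin r) k) : ℝ :=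
  sInf {x : ℝ | ∃ β : Fin r →₀ ℕ, MvPowerSeries.coeff β f ≠ 0 ∧ x = ∑ i, α i * (β i : ℝ)}

namespace MonomialValAux

variable {k : Type*} [Field k] {r : ℕ}

/-- The weight of an exponent vector. -/
noncomputable def Wt (α : Fin r → ℝ) (β : Fin r →₀ ℕ) : ℝ := ∑ i, α i * (β i : ℝ)

/-- The set of weights of exponents with nonzero coefficient. -/
def S (α : Fin r → ℝ) (f : MvPowerSeries (Fin r) k) : Set ℝ :=
  {x : ℝ | ∃ β : Fin r →₀ ℕ, MvPowerSeries.coeff β f ≠ 0 ∧ x = Wt α β}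

lemma wOrd_eq (α : Fin r → ℝ) (f : MvPowerSeries (Fin r) k) : wOrd α f = sInf (S α f) := rfl

lemma Wt_nonneg {α : Fin r → ℝ} (hα : ∀ i, 0 < α i) (β : Fin r →₀ ℕ) : 0 ≤ Wt α β :=
  Finset.sum_nonneg fun i _ => mul_nonneg (hα i).le (Nat.cast_nonneg _)

lemma Wt_add (α : Fin r → ℝ) (β γ : Fin r →₀ ℕ) : Wt α (β + γ) = Wt α β + Wt α γ := by
  simp only [Wt, Finsupp.add_apply, Nat.cast_add, mul_add]
  exact Finset.sum_add_distrib

lemma Wt_zero (α : Fin r → ℝ) : Wt α 0 = 0 := by simp [Wt]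

lemma finite_le (N : Fin r → ℕ) : {β : Fin r →₀ ℕ | ∀ i, β i ≤ N i}.Finite := by
  have h : {β : Fin r →₀ ℕ | ∀ i, β i ≤ N i} ⊆
      Finsupp.equivFunOnFinite ⁻¹' (Set.pi Set.univ fun i => Set.Iic (N i)) := by
    intro β hβ i _
    exact hβ i
  exact ((Set.Finite.pi fun i => Set.finite_Iic (N i)).preimage
    (Finsupp.equivFunOnFinite.injective.injOn)).subset h

lemma finite_wt_le {α : Fin r → ℝ} (hα : ∀ i, 0 < α i) (C : ℝ) :
    {β : Fin r →₀ ℕ | Wt α β ≤ C}.Finite := by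
  apply (finite_le fun i => ⌈C / α i⌉₊).subset
  intro β hβ i
  have h1 : α i * (β i : ℝ) ≤ C := by
    refine le_trans ?_ hβ
    exact Finset.single_le_sum (fun j _ => mul_nonneg (hα j).le (Nat.cast_nonneg _))
      (Finset.mem_univ i)
  have h2 : (β i : ℝ) ≤ C / α i := (le_div_iff₀ (hα i)).2 (by linarith [mul_comm (α i) ((β i : ℝ))])
  have h3 : (β i : ℝ) ≤ (⌈C / α i⌉₊ : ℝ) := h2.trans (Nat.le_ceil _)
  exact_mod_cast h3

lemma S_nonempty {α : Fin r → ℝ} {f : MvPowerSeries (Fin r) k} (hf : f ≠ 0) :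
    (S α f).Nonempty := by
  by_contra h
  apply hf
  ext β
  rw [Set.not_nonempty_iff_eq_empty, Set.eq_empty_iff_forall_notMem] at h
  by_contra hc
  exact h (Wt α β) ⟨β, by simpa using hc, rfl⟩

lemma isLeast_wOrd {α : Fin r → ℝ} (hα : ∀ i, 0 < α i) {f : MvPowerSeries (Fin r) k}
    (hf : f ≠ 0) : IsLeast (S α f) (wOrd α f) := by
  obtain ⟨c, hc⟩ := S_nonempty (α := α) hf
  set T : Set ℝ := S α f ∩ Set.Iic c with hT
  have hTfin : T.Finite := by
    apply ((finite_wt_le hα c).image (Wt α)).subset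
    rintro x ⟨⟨β, hβ, rfl⟩, hx⟩
    exact ⟨β, hx, rfl⟩
  have hTne : T.Nonempty := ⟨c, hc, le_refl c⟩
  obtain ⟨m, hmT, hm⟩ := Set.exists_min_image T id hTfin hTne
  have hleast : IsLeast (S α f) m := by
    refine ⟨hmT.1, fun x hx => ?_⟩
    by_cases hxc : x ≤ c
    · exact hm x ⟨hx, hxc⟩
    · exact le_trans (hmT.2) (le_of_not_ge hxc)
  rw [wOrd_eq, hleast.csInf_eq]
  exact hleast

lemma wOrd_nonneg {α : Fin r → ℝ} (hα : ∀ i, 0 < α i) {f : MvPowerSeries (Fin r) k}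
    (hf : f ≠ 0) : 0 ≤ wOrd α f := by
  obtain ⟨β, _, hβ2⟩ := (isLeast_wOrd hα hf).1
  rw [hβ2]
  exact Wt_nonneg hα β

set_option maxHeartbeats 1000000 in
lemma coeff_key {α : Fin r → ℝ} (hα : ∀ i, 0 < α i) {f g : MvPowerSeries (Fin r) k}
    (hf : f ≠ 0) (hg : g ≠ 0) :
    ∃ β : Fin r →₀ ℕ, MvPowerSeries.coeff β (f * g) ≠ 0 ∧
      Wt α β = wOrd α f + wOrd α g := by
  classical
  -- sets of weight-minimizing exponents
  set Mf : Set (Fin r →₀ ℕ) :=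
    {β | MvPowerSeries.coeff β f ≠ 0 ∧ Wt α β = wOrd α f} with hMf
  set Mg : Set (Fin r →₀ ℕ) :=
    {β | MvPowerSeries.coeff β g ≠ 0 ∧ Wt α β = wOrd α g} with hMg
  have hMf_fin : Mf.Finite := (finite_wt_le hα (wOrd α f)).subset (fun β hβ => le_of_eq hβ.2)
  have hMg_fin : Mg.Finite := (finite_wt_le hα (wOrd α g)).subset (fun β hβ => le_of_eq hβ.2)
  have hMf_ne : Mf.Nonempty := by
    obtain ⟨β, hβ1, hβ2⟩ := (isLeast_wOrd hα hf).1
    exact ⟨β, hβ1, hβ2.symm⟩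
  have hMg_ne : Mg.Nonempty := by
    obtain ⟨β, hβ1, hβ2⟩ := (isLeast_wOrd hα hg).1
    exact ⟨β, hβ1, hβ2.symm⟩
  obtain ⟨β₁, hβ₁, hmin₁⟩ := Set.exists_min_image Mf toLex hMf_fin hMf_ne
  obtain ⟨β₂, hβ₂, hmin₂⟩ := Set.exists_min_image Mg toLex hMg_fin hMg_ne
  refine ⟨β₁ + β₂, ?_, by rw [Wt_add, hβ₁.2, hβ₂.2]⟩
  have hcoeff : MvPowerSeries.coeff (β₁ + β₂) (f * g) =
      MvPowerSeries.coeff β₁ f * MvPowerSeries.coeff β₂ g := by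
    rw [MvPowerSeries.coeff_mul]
    refine Finset.sum_eq_single (β₁, β₂) ?_ ?_
    · rintro ⟨γ₁, γ₂⟩ hmem hne
      rw [Finset.HasAntidiagonal.mem_antidiagonal] at hmem
      by_contra hne0
      have hcf : MvPowerSeries.coeff γ₁ f ≠ 0 := fun h => hne0 (by simp [h])
      have hcg : MvPowerSeries.coeff γ₂ g ≠ 0 := fun h => hne0 (by simp [h])
      have h1 : wOrd α f ≤ Wt α γ₁ := (isLeast_wOrd hα hf).2 ⟨γ₁, hcf, rfl⟩
      have h2 : wOrd α g ≤ Wt α γ₂ := (isLeast_wOrd hα hg).2 ⟨γ₂, hcg, rfl⟩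
      have hsum : Wt α γ₁ + Wt α γ₂ = wOrd α f + wOrd α g := by
        rw [← Wt_add, hmem, Wt_add, hβ₁.2, hβ₂.2]
      have hw1 : Wt α γ₁ = wOrd α f := by linarith
      have hw2 : Wt α γ₂ = wOrd α g := by linarith
      have hle1 : toLex β₁ ≤ toLex γ₁ := hmin₁ γ₁ ⟨hcf, hw1⟩
      have hle2 : toLex β₂ ≤ toLex γ₂ := hmin₂ γ₂ ⟨hcg, hw2⟩
      -- In the Lex ordered cancel monoid, these force equality
      have hsumLex : toLex γ₁ + toLex γ₂ = toLex β₁ + toLex β₂ := by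
        show toLex (γ₁ + γ₂) = toLex (β₁ + β₂)
        rw [hmem]
      have h3 : toLex β₁ + toLex γ₂ ≤ toLex γ₁ + toLex γ₂ := add_le_add hle1 le_rfl
      have h4 : toLex γ₁ + toLex γ₂ ≤ toLex γ₁ + toLex γ₂ := le_refl _
      have h5 : toLex β₁ + toLex β₂ ≤ toLex β₁ + toLex γ₂ := add_le_add le_rfl hle2
      have heq1 : toLex β₁ + toLex γ₂ = toLex β₁ + toLex β₂ :=
        le_antisymm (h3.trans_eq hsumLex) h5
      have heq2 : toLex γ₂ = toLex β₂ := add_left_cancel heq1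
      rw [heq2] at hsumLex
      have heq4 : toLex γ₁ = toLex β₁ := add_right_cancel hsumLex
      exact hne (Prod.ext (toLex.injective heq4) (toLex.injective heq2))
    · intro h
      simp only [Finset.HasAntidiagonal.mem_antidiagonal] at h
      exact absurd trivial h
  rw [hcoeff]
  exact mul_ne_zero hβ₁.1 hβ₂.1

lemma mul_ne_zero' {α : Fin r → ℝ} (hα : ∀ i, 0 < α i) {f g : MvPowerSeries (Fin r) k}
    (hf : f ≠ 0) (hg : g ≠ 0) : f * g ≠ 0 := by
  obtain ⟨β, hβ, -⟩ := coeff_key hα hf hg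
  intro h
  exact hβ (by simp [h])

lemma wOrd_mul {α : Fin r → ℝ} (hα : ∀ i, 0 < α i) {f g : MvPowerSeries (Fin r) k}
    (hf : f ≠ 0) (hg : g ≠ 0) : wOrd α (f * g) = wOrd α f + wOrd α g := by
  obtain ⟨β, hβ, hWβ⟩ := coeff_key hα hf hg
  have hfg : f * g ≠ 0 := mul_ne_zero' hα hf hg
  refine le_antisymm ?_ ?_
  · have := (isLeast_wOrd hα hfg).2 ⟨β, hβ, rfl⟩
    rw [hWβ] at this
    exact this
  · obtain ⟨γ, hγ, hWγ⟩ := (isLeast_wOrd hα hfg).1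
    rw [MvPowerSeries.coeff_mul] at hγ
    obtain ⟨⟨γ₁, γ₂⟩, hmem, hne⟩ := Finset.exists_ne_zero_of_sum_ne_zero hγ
    rw [Finset.HasAntidiagonal.mem_antidiagonal] at hmem
    have hcf : MvPowerSeries.coeff γ₁ f ≠ 0 := fun h => hne (by simp [h])
    have hcg : MvPowerSeries.coeff γ₂ g ≠ 0 := fun h => hne (by simp [h])
    have h1 : wOrd α f ≤ Wt α γ₁ := (isLeast_wOrd hα hf).2 ⟨γ₁, hcf, rfl⟩
    have h2 : wOrd α g ≤ Wt α γ₂ := (isLeast_wOrd hα hg).2 ⟨γ₂, hcg, rfl⟩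
    have : Wt α γ = Wt α γ₁ + Wt α γ₂ := by rw [← Wt_add, hmem]
    rw [hWγ, this]
    linarith

lemma wOrd_one {α : Fin r → ℝ} (hα : ∀ i, 0 < α i) :
    wOrd α (1 : MvPowerSeries (Fin r) k) = 0 := by
  have h1 : (1 : MvPowerSeries (Fin r) k) ≠ 0 := one_ne_zero
  obtain ⟨β, hβ, hWβ⟩ := (isLeast_wOrd hα h1).1
  have : β = 0 := by
    by_contra hb
    apply hβ
    rw [MvPowerSeries.coeff_one, if_neg hb]
  rw [hWβ, this, Wt_zero]

lemma wOrd_add_ge {α : Fin r → ℝ} (hα : ∀ i, 0 < α i) {f g : MvPowerSeries (Fin r) k}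
    (hf : f ≠ 0) (hg : g ≠ 0) (hfg : f + g ≠ 0) :
    min (wOrd α f) (wOrd α g) ≤ wOrd α (f + g) := by
  obtain ⟨γ, hγ, hWγ⟩ := (isLeast_wOrd hα hfg).1
  have : MvPowerSeries.coeff γ f ≠ 0 ∨ MvPowerSeries.coeff γ g ≠ 0 := by
    by_contra h
    push_neg at h
    apply hγ
    rw [map_add, h.1, h.2, add_zero]
  rw [hWγ]
  rcases this with h | h
  · exact le_trans (min_le_left _ _) ((isLeast_wOrd hα hf).2 ⟨γ, h, rfl⟩)
  · exact le_trans (min_le_right _ _) ((isLeast_wOrd hα hg).2 ⟨γ, h, rfl⟩)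

end MonomialValAux

open MonomialValAux in
/-- **The monomial valuation (Proposition 2.4.4(2), power-series model).**  Let `k` be a
field, `r ≥ 1`, and let `α : Fin r → ℝ` have positive entries.  There is a unique
valuation `v : MvPowerSeries (Fin r) k → ℝ≥0` with `v 0 = 0` and
`v f = exp (−w_α(f))` for every nonzero `f`. -/
theorem exists_unique_monomial_valuation
    (k : Type*) [Field k] (r : ℕ) (hr : 0 < r) (α : Fin r → ℝ) (hα : ∀ i, 0 < α i) :
    ∃! v : Valuation (MvPowerSeries (Fin r) k) ℝ≥0,
      v 0 = 0 ∧
      ∀ f : MvPowerSeries (Fin r) k, f ≠ 0 →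
        v f = Real.toNNReal (Real.exp (-(wOrd α f))) := by
  classical
  set V : MvPowerSeries (Fin r) k → ℝ≥0 :=
    fun f => if f = 0 then 0 else Real.toNNReal (Real.exp (-(wOrd α f))) with hV
  have hV0 : V 0 = 0 := by simp [hV]
  have hVne : ∀ f : MvPowerSeries (Fin r) k, f ≠ 0 →
      V f = Real.toNNReal (Real.exp (-(wOrd α f))) := by
    intro f hf; simp [hV, hf]
  have hV1 : V 1 = 1 := by
    rw [hVne 1 one_ne_zero, wOrd_one hα, neg_zero, Real.exp_zero, Real.toNNReal_one]
  have hVmul : ∀ f g : MvPowerSeries (Fin r) k, V (f * g) = V f * V g := by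
    intro f g
    by_cases hf : f = 0
    · simp [hf, hV0, hV]
    by_cases hg : g = 0
    · simp [hg, hV0, hV]
    have hfg : f * g ≠ 0 := mul_ne_zero' hα hf hg
    rw [hVne _ hfg, hVne _ hf, hVne _ hg, wOrd_mul hα hf hg, neg_add, Real.exp_add,
      Real.toNNReal_mul (Real.exp_nonneg _)]
  have hVadd : ∀ f g : MvPowerSeries (Fin r) k, V (f + g) ≤ max (V f) (V g) := by
    intro f g
    by_cases hfg : f + g = 0
    · simp [hfg, hV0]
    by_cases hf : f = 0
    · rw [hf, zero_add]; exact le_max_right _ _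
    by_cases hg : g = 0
    · rw [hg, add_zero]; exact le_max_left _ _
    have hmin : min (wOrd α f) (wOrd α g) ≤ wOrd α (f + g) := wOrd_add_ge hα hf hg hfg
    rw [hVne _ hfg, hVne _ hf, hVne _ hg]
    calc Real.toNNReal (Real.exp (-(wOrd α (f + g))))
        ≤ Real.toNNReal (Real.exp (max (-(wOrd α f)) (-(wOrd α g)))) := by
          apply Real.toNNReal_mono
          apply Real.exp_le_exp.2
          rw [← neg_inf]
          exact neg_le_neg hmin
      _ = max (Real.toNNReal (Real.exp (-(wOrd α f)))) (Real.toNNReal (Real.exp (-(wOrd α g)))) := by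
          rw [Real.exp_monotone.map_max, Real.toNNReal_monotone.map_max]
  refine ⟨{ toFun := V, map_zero' := hV0, map_one' := hV1, map_mul' := hVmul,
            map_add_le_max' := hVadd }, ⟨hV0, hVne⟩, ?_⟩
  rintro v ⟨hv0, hvne⟩
  apply Valuation.ext
  intro f
  by_cases hf : f = 0
  · rw [hf, hv0]; exact hV0.symm
  · rw [hvne f hf]; exact (hVne f hf).symm
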